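/- arXiv:2605.14459 — 2 statements merged into one kernel-verified Lean document; each statement's English description precedes it below -/
import Mathlib

section
/- Let $w_\varepsilon(x) = \exp((1-x)/(\varepsilon\beta_*))$ with $\beta_* = 2/\sqrt{\underline{b}}$, and let $b \in L^\infty(-1,1)$ with $b \ge \underline{b} > 0$ a.e. Then for every $u \in H^1(-1,1)$, setting $v_u = u\, w_\varepsilon^2$, the bilinear form $B_\varepsilon(u, v_u) = \varepsilon^2 \int u' v_u' + \int b\, u\, v_u$ satisfies $B_\varepsilon(u, v_u) \ge C_1 \int_{-1}^1 (\varepsilon^2 (u')^2 + u^2)\, w_\varepsilon^2\,dx$ with $C_1 = \min\{1/3, 5\underline{b}/8\}$ independent of $\varepsilon \in (0,1]$. -/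
open intervalIntegral Real MeasureTheory

lemma key_ineq (bl ε A B W bx s : ℝ) (hbl : 0 < bl) (hε : 0 < ε)
    (hb : bl ≤ bx) (hsq : s^2 = bl) :
    min (1/3) (5 * bl / 8) * ((ε^2 * A^2 + B^2) * W^2)
      ≤ ε^2 * A^2 * W^2 - ε * s * (A * B * W^2) + bx * B * (B * W^2) := by
  have h1 : min (1/3) (5 * bl / 8) ≤ 1/3 := min_le_left _ _
  have h2 : min (1/3) (5 * bl / 8) ≤ 5 * bl / 8 := min_le_right _ _
  nlinarith [sq_nonneg ((4*ε*A - 3*s*B)*W), mul_nonneg (sub_nonneg.2 hb) (sq_nonneg (B*W)),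
    mul_le_mul_of_nonneg_right h1 (sq_nonneg (ε*A*W)),
    mul_le_mul_of_nonneg_right h2 (sq_nonneg (B*W))]

/-- Weighted coercivity: for `w_ε(x) = exp((1-x)/(ε β*))`, `β* = 2/√b̲`,
`b ∈ L^∞` with `b ≥ b̲ > 0`, and `v_u = u w_ε²`, one has
`B_ε(u, v_u) ≥ C₁ ∫ (ε² (u')² + u²) w_ε²` with `C₁ = min{1/3, 5 b̲/8}`
independent of `ε ∈ (0,1]`. -/
theorem stmt6
    (bl : ℝ) (hbl : 0 < bl)
    (ε : ℝ) (hε : ε ∈ Set.Ioc (0:ℝ) 1)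
    (b u : ℝ → ℝ) (hmb : Measurable b)
    (hb : ∀ x ∈ Set.Icc (-1:ℝ) 1, bl ≤ b x)
    (hu : ContDiff ℝ 1 u)
    (hIb : IntervalIntegrable
      (fun x => b x * u x * (u x * (Real.exp ((1 - x) / (ε * (2 / Real.sqrt bl))))^2))
      volume (-1) 1) :
    let β : ℝ := 2 / Real.sqrt bl
    let w : ℝ → ℝ := fun x => Real.exp ((1 - x) / (ε * β))
    (ε^2 * (∫ x in (-1:ℝ)..1, deriv u x * deriv (fun y => u y * (w y)^2) x)
        + ∫ x in (-1:ℝ)..1, b x * u x * (u x * (w x)^2))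
      ≥ min (1/3) (5 * bl / 8)
        * ∫ x in (-1:ℝ)..1, (ε^2 * (deriv u x)^2 + (u x)^2) * (w x)^2 := by
  intro β w
  have hε0 : 0 < ε := hε.1
  set s : ℝ := Real.sqrt bl with hsdef
  have hs0 : 0 < s := Real.sqrt_pos.2 hbl
  have hsq : s^2 = bl := Real.sq_sqrt hbl.le
  have hβ0 : 0 < β := by positivity
  -- derivative of w
  have hw : ∀ x, HasDerivAt w (-(1/(ε*β)) * w x) x := by
    intro x
    have h1 : HasDerivAt (fun y : ℝ => (1-y)/(ε*β)) (-(1/(ε*β))) x := by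
      simpa [neg_div] using ((hasDerivAt_id x).const_sub 1).div_const (ε*β)
    simpa [w, mul_comm] using h1.exp
  have hu' : ∀ x, HasDerivAt u (deriv u x) x :=
    fun x => (hu.differentiable one_ne_zero x).hasDerivAt
  have hcu : Continuous u := hu.continuous
  have hcu' : Continuous (deriv u) := hu.continuous_deriv le_rfl
  have hcw : Continuous w := by
    apply Real.continuous_exp.comp
    exact (continuous_const.sub continuous_id).div_const _
  have hv : ∀ x, deriv (fun y => u y * (w y)^2) x
      = deriv u x * (w x)^2 - s/ε * (u x * (w x)^2) := by
    intro x
    have h := (hu' x).mul ((hw x).pow 2)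
    rw [show (fun y => u y * (w y)^2) = u * w^2 from rfl, h.deriv]
    have hεβ : ε * β ≠ 0 := by positivity
    have hβ : β = 2 / s := rfl
    field_simp [hβ]
    simp only [Pi.pow_apply]
    rw [hβ]
    linear_combination (u x * w x ^ 2) * div_mul_cancel₀ (2:ℝ) hs0.ne'
  have hI1 : (∫ x in (-1:ℝ)..1, deriv u x * deriv (fun y => u y * (w y)^2) x)
      = ∫ x in (-1:ℝ)..1,
          ((deriv u x)^2 * (w x)^2 - s/ε * (deriv u x * u x * (w x)^2)) := by
    apply intervalIntegral.integral_congr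
    intro x _
    simp only [hv]; ring
  have hf1 : IntervalIntegrable
      (fun x => ε^2 * ((deriv u x)^2 * (w x)^2 - s/ε * (deriv u x * u x * (w x)^2)))
      volume (-1) 1 := by
    have hc : Continuous (fun x => ε^2 * ((deriv u x)^2 * (w x)^2
        - s/ε * (deriv u x * u x * (w x)^2))) :=
      continuous_const.mul (((hcu'.pow 2).mul (hcw.pow 2)).sub
        (continuous_const.mul ((hcu'.mul hcu).mul (hcw.pow 2))))
    exact hc.intervalIntegrable (μ := volume) _ _
  have hg : IntervalIntegrable
      (fun x => (ε^2 * (deriv u x)^2 + (u x)^2) * (w x)^2) volume (-1) 1 := by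
    have hc : Continuous (fun x => (ε^2 * (deriv u x)^2 + (u x)^2) * (w x)^2) :=
      ((continuous_const.mul (hcu'.pow 2)).add (hcu.pow 2)).mul (hcw.pow 2)
    exact hc.intervalIntegrable (μ := volume) _ _
  have hIb' : IntervalIntegrable (fun x => b x * u x * (u x * (w x)^2)) volume (-1) 1 := hIb
  rw [hI1, ← intervalIntegral.integral_const_mul,
    ← intervalIntegral.integral_add hf1 hIb',
    ← intervalIntegral.integral_const_mul]
  apply intervalIntegral.integral_mono_on (by norm_num : (-1:ℝ) ≤ 1)
    (hg.const_mul _) (hf1.add hIb')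
  intro x hx
  have hbx := hb x hx
  have hexp : ε^2 * ((deriv u x)^2 * (w x)^2 - s/ε * (deriv u x * u x * (w x)^2))
      = ε^2 * (deriv u x)^2 * (w x)^2 - ε * s * (deriv u x * u x * (w x)^2) := by
    field_simp
  rw [hexp]
  exact key_ineq bl ε (deriv u x) (u x) (w x) (b x) s hbl hε0 hbx hsq
end

section
/- For every $\tau \in (0,1]$ there exist real parameters $\alpha, \beta, \gamma, \delta$ such that the function $g(x) = \gamma\tanh(\alpha x + \beta) + \delta$ (a depth-2 tanh network with one hidden neuron, 4 nonzero parameters) satisfies $|e^{-x} - g(x)| \le e^{-\tau}$ and $|-e^{-x} - g'(x)| \le e^{-\tau}$ for all $x \ge 0$. -/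
open Real

lemma tanh_exp' (t : ℝ) :
    Real.tanh t = (1 - Real.exp (-(2*t))) / (1 + Real.exp (-(2*t))) := by
  rw [Real.tanh_eq_sinh_div_cosh, Real.sinh_eq, Real.cosh_eq]
  have h1 : Real.exp (-t) = Real.exp t * Real.exp (-(2*t)) := by
    rw [← Real.exp_add]; ring_nf
  have h2 : (0:ℝ) < 1 + Real.exp (-(2*t)) := by positivity
  have h3 : Real.exp t ≠ 0 := Real.exp_ne_zero t
  rw [h1]
  field_simp

set_option maxHeartbeats 1000000 in
/-- Single-neuron tanh emulation of the decaying exponential: for every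
`τ ∈ (0,1]` there are parameters `α, β, γ, δ` such that
`g(x) = γ tanh(α x + β) + δ` satisfies `|e^{-x} - g(x)| ≤ e^{-τ}` and
`|-e^{-x} - g'(x)| ≤ e^{-τ}` for all `x ≥ 0`. -/
theorem stmt19 (τ : ℝ) (hτ : τ ∈ Set.Ioc (0:ℝ) 1) :
    ∃ α β γ δ : ℝ, ∀ x : ℝ, 0 ≤ x →
      |Real.exp (-x) - (γ * Real.tanh (α * x + β) + δ)| ≤ Real.exp (-τ)
      ∧ |(-Real.exp (-x))
          - deriv (fun y => γ * Real.tanh (α * y + β) + δ) x| ≤ Real.exp (-τ) := by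
  obtain ⟨hτ0, hτ1⟩ := hτ
  refine ⟨1/2, 3/2, -(Real.exp 3)/2, Real.exp 3 / 2, fun x hx => ?_⟩
  set u := Real.exp (-(x+3)) with hu
  have hupos : 0 < u := Real.exp_pos _
  have hule : u ≤ Real.exp (-3) := Real.exp_le_exp.2 (by linarith)
  have hE : Real.exp 3 * u = Real.exp (-x) := by
    rw [hu, ← Real.exp_add]; ring_nf
  have hEx : Real.exp (-x) ≤ 1 := Real.exp_le_one_iff.2 (by linarith)
  have hExpos : 0 < Real.exp (-x) := Real.exp_pos _
  have h1u : (0:ℝ) < 1 + u := by linarith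
  have hτ3 : Real.exp (-3) ≤ Real.exp (-τ) := Real.exp_le_exp.2 (by linarith)
  have hτ1' : Real.exp (-1) ≤ Real.exp (-τ) := Real.exp_le_exp.2 (by linarith)
  have htanh : Real.tanh (1/2 * x + 3/2) = (1 - u) / (1 + u) := by
    rw [tanh_exp']
    congr 2 <;> · rw [hu]; ring_nf
  constructor
  · have hval : Real.exp (-x) - (-(Real.exp 3)/2 * Real.tanh (1/2 * x + 3/2) + Real.exp 3 / 2)
        = Real.exp (-x) * u / (1+u) := by
      rw [htanh, ← hE]
      field_simp
      ring
    rw [hval, abs_of_nonneg (by positivity)]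
    have hb : Real.exp (-x) * u / (1+u) ≤ u := by
      rw [div_le_iff₀ h1u]; nlinarith
    linarith
  · have hv : HasDerivAt (fun y => Real.exp (-(y+3))) (-u) x := by
      have h0 : HasDerivAt (fun y : ℝ => -(y+3)) (-1) x := by
        exact ((hasDerivAt_id x).add_const (3:ℝ)).neg
      have := h0.exp
      simpa [hu] using this
    have hnum : HasDerivAt (fun y => 1 - Real.exp (-(y+3))) u x := by
      simpa using hv.const_sub 1
    have hden : HasDerivAt (fun y => 1 + Real.exp (-(y+3))) (-u) x := by
      simpa using hv.const_add 1
    have hq := hnum.div hden (ne_of_gt h1u)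
    have hfull := (hq.const_mul (-(Real.exp 3)/2)).add_const (Real.exp 3 / 2)
    have hfun : (fun y => -(Real.exp 3)/2 * Real.tanh (1/2 * y + 3/2) + Real.exp 3 / 2)
        = (fun y => -(Real.exp 3)/2 * ((1 - Real.exp (-(y+3))) / (1 + Real.exp (-(y+3)))) + Real.exp 3 / 2) := by
      funext y
      rw [tanh_exp']
      congr 3 <;> ring_nf
    have hD : HasDerivAt (fun y => -(Real.exp 3)/2 * Real.tanh (1/2 * y + 3/2) + Real.exp 3 / 2)
        (-(Real.exp (-x) / (1+u)^2)) x := by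
      rw [hfun]
      refine HasDerivAt.congr_deriv hfull ?_
      simp only [← hu]
      rw [← hE]
      field_simp
      ring
    rw [hD.deriv]
    have habs : -Real.exp (-x) - -(Real.exp (-x) / (1+u)^2)
        = -(Real.exp (-x) * u * (2 + u) / (1+u)^2) := by
      field_simp
      ring
    rw [habs, abs_neg, abs_of_nonneg (by positivity)]
    have hb : Real.exp (-x) * u * (2+u) / (1+u)^2 ≤ u * (2+u) := by
      rw [div_le_iff₀ (by positivity)]
      have h1 : Real.exp (-x) * (u * (2+u)) ≤ u * (2+u) :=
        mul_le_of_le_one_left (by positivity) hEx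
      have h2 : u * (2+u) ≤ u * (2+u) * (1+u)^2 := by
        nlinarith [sq_nonneg u]
      nlinarith
    have hB3 : Real.exp (-3) = Real.exp (-1) ^ 3 := by
      rw [← Real.exp_nat_mul]; norm_num
    have hA : Real.exp (-1) < 1/2 := by
      have h1 : (2:ℝ) < Real.exp 1 := by
        have := Real.exp_one_gt_d9; linarith
      rw [Real.exp_neg]
      rw [inv_lt_comm₀ (by linarith) (by norm_num)]
      norm_num
      linarith
    have hApos : 0 < Real.exp (-1) := Real.exp_pos _
    have hA2 : Real.exp (-1)^2 < 1/4 := by nlinarith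
    have hA3 : Real.exp (-1)^3 ≤ Real.exp (-1)/4 := by nlinarith [hA2, hApos]
    have hA8 : Real.exp (-1)^3 ≤ 1/8 := by nlinarith [hA2, hApos, hA]
    rw [hB3] at hule
    have hu8 : u ≤ 1/8 := le_trans hule hA8
    have huA : u ≤ Real.exp (-1) / 4 := le_trans hule hA3
    clear hq hfull hD hfun hv hnum hden habs htanh hE
    have huu : u * u ≤ u * (1/8) := mul_le_mul_of_nonneg_left hu8 hupos.le
    have hfinal : u * (2+u) ≤ Real.exp (-1) := by nlinarith
    linarith
end
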